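/- Let H be an edge-minimal counterexample to Conjecture C2, that is, H is a linear hypergraph with no rank-1 edges satisfying q_list(H) > D(H) + 1, while every linear hypergraph with no rank-1 edges and strictly fewer edges H' satisfies q_list(H') ≤ D(H') + 1. Then for every edge e, q_list(H ∖ {e}) = D(H) + 1. -/

import Mathlib

open Finset

variable {V : Type*} [DecidableEq V]

/-- A proper list edge coloring of the hypergraph with edge set `E` from the lists `L`:
each edge gets a color from its list, and two distinct edges get the same color
only if they are disjoint. -/
def IsProperListColoring (E : Finset (Finset V)) (L : Finset V → Finset ℕ)
    (γ : Finset V → ℕ) : Prop :=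
  (∀ e ∈ E, γ e ∈ L e) ∧ ∀ e ∈ E, ∀ f ∈ E, e ≠ f → γ e = γ f → Disjoint e f

/-- `E` is `k`-list-edge-colorable: for every assignment of lists of size `k`
there is a proper list edge coloring. -/
def ListColorable (E : Finset (Finset V)) (k : ℕ) : Prop :=
  ∀ L : Finset V → Finset ℕ, (∀ e ∈ E, (L e).card = k) →
    ∃ γ : Finset V → ℕ, IsProperListColoring E L γ

/-- The list edge chromatic number `q_list`: the least `k` such that `E` is
`k`-list-edge-colorable. -/
noncomputable def qList (E : Finset (Finset V)) : ℕ :=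
  sInf {k | ListColorable E k}

/-- The degree of a vertex: the number of edges containing it. -/
def deg (E : Finset (Finset V)) (x : V) : ℕ := (E.filter fun e => x ∈ e).card

/-- The clique rank of an edge: `R(e) = ∑_{x ∈ e} (d(x) - 1)`. -/
def cliqueRank (E : Finset (Finset V)) (e : Finset V) : ℕ :=
  ∑ x ∈ e, (deg E x - 1)

/-- The clique degree of a vertex: `D(x) = ∑_{e ∋ x} (r(e) - 1)`. -/
def cliqueDeg (E : Finset (Finset V)) (x : V) : ℕ :=
  ∑ e ∈ E.filter (fun e => x ∈ e), (e.card - 1)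

/-- A hypergraph is linear if any two distinct edges meet in at most one vertex. -/
def Linear (E : Finset (Finset V)) : Prop :=
  ∀ e ∈ E, ∀ f ∈ E, e ≠ f → (e ∩ f).card ≤ 1

/-- The number of triangles with side `e`: unordered pairs `{f, g}` of edges
distinct from `e` such that `e, f, g` pairwise intersect. -/
def numTriangles (E : Finset (Finset V)) (e : Finset V) : ℕ :=
  (((E.erase e).powersetCard 2).filter fun p =>
    (∀ f ∈ p, (e ∩ f).Nonempty) ∧ ∀ f ∈ p, ∀ g ∈ p, f ≠ g → (f ∩ g).Nonempty).card

lemma listColorable_mono {E : Finset (Finset V)} {k m : ℕ} (hkm : k ≤ m)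
    (h : ListColorable E k) : ListColorable E m := by
  intro L hL
  have hsub : ∀ e, ∃ t, t ⊆ L e ∧ (e ∈ E → t.card = k) := by
    intro e
    by_cases he : e ∈ E
    · obtain ⟨t, ht, htc⟩ := Finset.exists_subset_card_eq (s := L e) (n := k) (by rw [hL e he]; exact hkm)
      exact ⟨t, ht, fun _ => htc⟩
    · exact ⟨∅, Finset.empty_subset _, fun h' => absurd h' he⟩
  choose L' hL'sub hL'card using hsub
  obtain ⟨γ, hγ1, hγ2⟩ := h L' (fun e he => hL'card e he)
  exact ⟨γ, fun e he => hL'sub e (hγ1 e he), hγ2⟩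

lemma listColorable_card (E : Finset (Finset V)) : ListColorable E E.card := by
  induction E using Finset.strongInduction with
  | _ E ih =>
  rcases E.eq_empty_or_nonempty with rfl | ⟨e, he⟩
  · intro L hL
    exact ⟨fun _ => 0, fun f hf => absurd hf (by simp), fun f hf => absurd hf (by simp)⟩
  · intro L hL
    have h1 : ListColorable (E.erase e) E.card :=
      listColorable_mono (Finset.card_le_card (Finset.erase_subset e E))
        (ih _ (Finset.erase_ssubset he))
    obtain ⟨γ, hγ1, hγ2⟩ := h1 L (fun f hf => hL f (Finset.mem_of_mem_erase hf))
    have hne : (L e \ (E.erase e).image γ).Nonempty := by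
      have h2 : ((E.erase e).image γ).card < (L e).card := by
        calc ((E.erase e).image γ).card ≤ (E.erase e).card := Finset.card_image_le
        _ < E.card := Finset.card_erase_lt_of_mem he
        _ = (L e).card := (hL e he).symm
      by_contra hcon
      rw [Finset.not_nonempty_iff_eq_empty, Finset.sdiff_eq_empty_iff_subset] at hcon
      exact absurd (Finset.card_le_card hcon) (Nat.not_le.mpr h2)
    obtain ⟨c, hc⟩ := hne
    rw [Finset.mem_sdiff] at hc
    refine ⟨Function.update γ e c, ?_, ?_⟩
    · intro f hf
      by_cases hfe : f = e
      · subst hfe; simp only [Function.update_self]; exact hc.1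
      · rw [Function.update_of_ne hfe]; exact hγ1 f (Finset.mem_erase.mpr ⟨hfe, hf⟩)
    · intro f hf g hg hfg heq
      by_cases hfe : f = e
      · subst hfe
        rw [Function.update_self, Function.update_of_ne (Ne.symm hfg)] at heq
        exact absurd heq (fun h =>
          hc.2 (Finset.mem_image.mpr ⟨g, Finset.mem_erase.mpr ⟨Ne.symm hfg, hg⟩, h.symm⟩))
      · by_cases hge : g = e
        · subst hge
          rw [Function.update_self, Function.update_of_ne hfe] at heq
          exact absurd heq (fun h =>
            hc.2 (Finset.mem_image.mpr ⟨f, Finset.mem_erase.mpr ⟨hfe, hf⟩, h⟩))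
        · rw [Function.update_of_ne hfe, Function.update_of_ne hge] at heq
          exact hγ2 f (Finset.mem_erase.mpr ⟨hfe, hf⟩) g (Finset.mem_erase.mpr ⟨hge, hg⟩) hfg heq

lemma listColorable_extend {E : Finset (Finset V)} {e : Finset V} (he : e ∈ E) {D : ℕ}
    (h : ListColorable (E.erase e) D) : ListColorable E (D + 1) := by
  intro L hL
  have hLe : (L e).Nonempty := by rw [← Finset.card_pos, hL e he]; omega
  obtain ⟨c, hc⟩ := hLe
  have hsub : ∀ f, ∃ t, t ⊆ (L f).erase c ∧ (f ∈ E.erase e → t.card = D) := by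
    intro f
    by_cases hf : f ∈ E.erase e
    · have h1 : D ≤ ((L f).erase c).card := by
        have h2 := hL f (Finset.mem_of_mem_erase hf)
        have h3 : (L f).card - 1 ≤ ((L f).erase c).card := Finset.pred_card_le_card_erase
        omega
      obtain ⟨t, ht, htc⟩ := Finset.exists_subset_card_eq (n := D) h1
      exact ⟨t, ht, fun _ => htc⟩
    · exact ⟨∅, Finset.empty_subset _, fun h' => absurd h' hf⟩
  choose L' hL'sub hL'card using hsub
  obtain ⟨γ, hγ1, hγ2⟩ := h L' hL'card
  have hγL : ∀ f ∈ E.erase e, γ f ∈ (L f).erase c := fun f hf => hL'sub f (hγ1 f hf)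
  refine ⟨Function.update γ e c, ?_, ?_⟩
  · intro f hf
    by_cases hfe : f = e
    · subst hfe; simp only [Function.update_self]; exact hc
    · rw [Function.update_of_ne hfe]
      exact Finset.mem_of_mem_erase (hγL f (Finset.mem_erase.mpr ⟨hfe, hf⟩))
  · intro f hf g hg hfg heq
    by_cases hfe : f = e
    · subst hfe
      rw [Function.update_self, Function.update_of_ne (Ne.symm hfg)] at heq
      exact absurd heq.symm
        (Finset.ne_of_mem_erase (hγL g (Finset.mem_erase.mpr ⟨Ne.symm hfg, hg⟩)))
    · by_cases hge : g = e
      · subst hge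
        rw [Function.update_self, Function.update_of_ne hfe] at heq
        exact absurd heq (Finset.ne_of_mem_erase (hγL f (Finset.mem_erase.mpr ⟨hfe, hf⟩)))
      · rw [Function.update_of_ne hfe, Function.update_of_ne hge] at heq
        exact hγ2 f (Finset.mem_erase.mpr ⟨hfe, hf⟩) g (Finset.mem_erase.mpr ⟨hge, hg⟩) hfg heq

lemma cliqueDeg_erase_le (E : Finset (Finset V)) (e : Finset V) (x : V) :
    cliqueDeg (E.erase e) x ≤ cliqueDeg E x :=
  Finset.sum_le_sum_of_subset
    (Finset.filter_subset_filter _ (Finset.erase_subset _ _))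

/-- An edge-minimal counterexample `H` to Conjecture C2 satisfies
`q_list(H \ {e}) = D(H) + 1` for every edge `e`. -/
theorem stmt16 {V : Type*} [DecidableEq V] [Fintype V] (E : Finset (Finset V))
    (hlin : Linear E) (h2 : ∀ e ∈ E, 2 ≤ e.card)
    (hcex : Finset.univ.sup (cliqueDeg E) + 1 < qList E)
    (hmin : ∀ E' : Finset (Finset V), Linear E' → (∀ e ∈ E', 2 ≤ e.card) →
      E'.card < E.card → qList E' ≤ Finset.univ.sup (cliqueDeg E') + 1) :
    ∀ e ∈ E, qList (E.erase e) = Finset.univ.sup (cliqueDeg E) + 1 := by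
  intro e he
  set D := Finset.univ.sup (cliqueDeg E) with hD
  have hupper : qList (E.erase e) ≤ D + 1 := by
    have h := hmin (E.erase e)
      (fun f hf g hg hfg => hlin f (Finset.mem_of_mem_erase hf) g (Finset.mem_of_mem_erase hg) hfg)
      (fun f hf => h2 f (Finset.mem_of_mem_erase hf))
      (Finset.card_erase_lt_of_mem he)
    refine h.trans (Nat.add_le_add_right ?_ 1)
    exact Finset.sup_mono_fun (fun x _ => cliqueDeg_erase_le E e x)
  have hlower : D + 1 ≤ qList (E.erase e) := by
    by_contra hcon
    push_neg at hcon
    have hne : {k | ListColorable (E.erase e) k}.Nonempty := ⟨_, listColorable_card _⟩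
    have hmem : ListColorable (E.erase e) (qList (E.erase e)) := Nat.sInf_mem hne
    have hDc : ListColorable (E.erase e) D := listColorable_mono (by omega) hmem
    have hEc : ListColorable E (D + 1) := listColorable_extend he hDc
    have : qList E ≤ D + 1 := Nat.sInf_le hEc
    omega
  omega
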